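/- Strong soundness: If X ⊢ φ and w is a state of a game such that w ⊩ χ for each formula χ ∈ X, then w ⊩ φ. -/

import Mathlib

/-- Formulas of the language Φ, over a set `A` of agents, with propositional
variables indexed by `ℕ`.  `dil C X s` is the ethical-dilemma modality `[C:X]_s`,
where the finite set `X` of formulae is represented by a list. -/
inductive Fm (A : Type) : Type
  | var : ℕ → Fm A
  | neg : Fm A → Fm A
  | imp : Fm A → Fm A → Fm A
  | dil : Set A → List (Fm A) → (A → ℝ) → Fm A

namespace Fm

variable {A : Type}

/-- Truth ⊤. -/
def top : Fm A := imp (var 0) (var 0)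

/-- Falsehood ⊥. -/
def bot : Fm A := neg top

/-- Conjunction, defined as usual. -/
def conj (φ ψ : Fm A) : Fm A := neg (imp φ (neg ψ))

/-- Disjunction, defined as usual. -/
def disj (φ ψ : Fm A) : Fm A := imp (neg φ) ψ

/-- Disjunction of all formulae in a list (`∨∅ = ⊥`). -/
def bigOr : List (Fm A) → Fm A
  | [] => bot
  | φ :: rest => disj φ (bigOr rest)

/-- Conjunction of all formulae in a list (`∧∅ = ⊤`). -/
def bigAnd : List (Fm A) → Fm A
  | [] => top
  | φ :: rest => conj φ (bigAnd rest)

/-- `X ⊗ Y = {φ ∧ ψ | φ ∈ X, ψ ∈ Y}`. -/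
def otimes (X Y : List (Fm A)) : List (Fm A) :=
  X.flatMap fun φ => Y.map fun ψ => conj φ ψ

/-- `X₁ ⊗ X₂ ⊗ ⋯ ⊗ Xₙ`, which is `{⊤}` for `n = 0` and `X₁` for `n = 1`. -/
def bigOtimes : List (List (Fm A)) → List (Fm A)
  | [] => [top]
  | X :: rest => rest.foldl otimes X

/-- The weak dilemma `⟪C:X⟫_s`, i.e. the disjunction `⋁_{∅ ≠ Z ⊆ X} [C:Z]_s`. -/
def wdil (C : Set A) (X : List (Fm A)) (s : A → ℝ) : Fm A :=
  bigOr (((X.sublists).filter fun Z => !Z.isEmpty).map fun Z => dil C Z s)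

/-- A propositional tautology in the language Φ: a formula that evaluates to true
under every Boolean valuation that respects negation and implication (treating
variables and dilemma formulae as atoms). -/
def Tautology (φ : Fm A) : Prop :=
  ∀ v : Fm A → Bool,
    (∀ ψ, v (neg ψ) = !v ψ) →
    (∀ ψ χ, v (imp ψ χ) = (!v ψ || v χ)) →
    v φ = true

/-- Derivability `⊢ φ` in the logical system: all propositional tautologies,
the Combination, Monotonicity, Minimality and No Alternatives axioms, and the
Modus Ponens, Necessitation and Substitution inference rules. -/
inductive Derives : Fm A → Prop
  | taut {φ : Fm A} : Tautology φ → Derives φ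
  | comb {C : Set A} {X Y : List (Fm A)} {s : A → ℝ} :
      C.Nonempty → X ≠ [] → Y ≠ [] →
      Derives (imp (dil C X s) (imp (dil C Y s) (wdil C (otimes X Y) s)))
  | mono {C D : Set A} {X : List (Fm A)} {s s' : A → ℝ} :
      C.Nonempty → C ⊆ D → X ≠ [] → (∀ a, s a ≤ s' a) →
      Derives (imp (dil C X s') (wdil D X s))
  | minim {C : Set A} {X Y : List (Fm A)} {s : A → ℝ} :
      C.Nonempty → Y ≠ [] → {ψ | ψ ∈ Y} ⊂ {ψ | ψ ∈ X} →
      Derives (imp (dil C X s) (neg (dil C Y s)))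
  | noalt {C D : Set A} {X : List (Fm A)} {s : A → ℝ} :
      C.Nonempty → D.Nonempty → (∃ φ, {ψ | ψ ∈ X} = {φ}) →
      Derives (imp (dil C X s) (dil D X s))
  | mp {φ ψ : Fm A} : Derives φ → Derives (imp φ ψ) → Derives ψ
  | nec {φ : Fm A} {C : Set A} {s : A → ℝ} :
      C.Nonempty → Derives φ → Derives (dil C [φ] s)
  | subst {C : Set A} {X : List (Fm A)} {s : A → ℝ} {τ : Fm A → Fm A} :
      C.Nonempty → X ≠ [] → (∀ φ ∈ X, Derives (imp φ (τ φ))) →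
      Derives (imp (dil C X s) (wdil C (X.map τ) s))

/-- `Γ ⊢ φ`: provable from the theorems of the system and the additional set of
formulae `Γ` using the Modus Ponens inference rule only. -/
inductive DerivesFrom (Γ : Set (Fm A)) : Fm A → Prop
  | thm {φ : Fm A} : Derives φ → DerivesFrom Γ φ
  | hyp {φ : Fm A} : φ ∈ Γ → DerivesFrom Γ φ
  | mp {φ ψ : Fm A} : DerivesFrom Γ φ → DerivesFrom Γ (imp φ ψ) → DerivesFrom Γ ψ

end Fm

/-- A game `(W, Δ, |·|, M, π)`. -/
structure Game (A : Type) where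
  /-- the set of states -/
  W : Type
  /-- the nonempty set Δ of actions -/
  St : Type
  st_nonempty : Nonempty St
  /-- `cost d a w` is the cost `|d|ᵃ_w` of action `d` for agent `a` in state `w` -/
  cost : St → A → W → ℝ
  /-- the mechanism `M ⊆ W × Δ^𝒜 × W` -/
  M : W → (A → St) → W → Prop
  /-- valuation of propositional variables -/
  pi : ℕ → Set W

namespace Game

variable {A : Type}

/-- Satisfaction `w ⊩ φ` (as `Sat G φ w`). -/
def Sat (G : Game A) : Fm A → G.W → Prop
  | .var p, w => w ∈ G.pi p
  | .neg φ, w => ¬ Sat G φ w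
  | .imp φ ψ, w => ¬ Sat G φ w ∨ Sat G ψ w
  | .dil C X s, w =>
      (∀ t : ↥C → G.St, ∃ φ, ∃ _ : φ ∈ X,
          ∀ (δ : A → G.St) (u : G.W),
            (∀ a : A, G.cost (δ a) a w ≤ s a) → (∀ a : ↥C, t a = δ a.1) →
            G.M w δ u → Sat G φ u) ∧
      (∀ Y : Set (Fm A), Y.Nonempty → Y ⊂ {ψ | ψ ∈ X} →
          ∃ t : ↥C → G.St, ∀ φ, ∀ _ : φ ∈ Y,
            ∃ (δ : A → G.St) (u : G.W),
              (∀ a : A, G.cost (δ a) a w ≤ s a) ∧ (∀ a : ↥C, t a = δ a.1) ∧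
              G.M w δ u ∧ ¬ Sat G φ u)
termination_by φ _ => sizeOf φ
decreasing_by
  all_goals
    first
      | (simp <;> omega)
      | (have h1 : sizeOf φ < sizeOf X := List.sizeOf_lt_of_mem ‹φ ∈ X›
         simp <;> omega)
      | (have hX : φ ∈ X := by
           have := (‹Y ⊂ {ψ | ψ ∈ X}›.1) ‹φ ∈ Y›
           simpa using this
         have h1 : sizeOf φ < sizeOf X := List.sizeOf_lt_of_mem hX
         simp <;> omega)

end Game

namespace Fm

variable {A : Type}

/-- A set of formulae is consistent if ⊥ is not provable from it. -/
def Consistent (Γ : Set (Fm A)) : Prop := ¬ DerivesFrom Γ bot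

/-- A maximal consistent set of formulae. -/
def MCS (Γ : Set (Fm A)) : Prop :=
  Consistent Γ ∧ ∀ φ : Fm A, φ ∉ Γ → ¬ Consistent (insert φ Γ)

end Fm

/-- The canonical game: states are maximal consistent sets, actions are pairs
`(Ψ, c)` of a set of "demanded" formulae and an offered price `c`. -/
def canonicalGame (A : Type) : Game A where
  W := {Γ : Set (Fm A) // Fm.MCS Γ}
  St := Set (Fm A) × ℝ
  st_nonempty := ⟨(∅, 0)⟩
  cost := fun d _ _ => d.2
  M := fun w δ u =>
    (∀ a : A, (δ a).1 ⊆ u.1) ∧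
    ∀ (C : Set A) (X : List (Fm A)) (s : A → ℝ),
      C.Nonempty → X ≠ [] → Fm.wdil C X s ∈ w.1 → (∀ a : A, (δ a).2 ≤ s a) →
      ∃ a ∈ C, ∃ φ ∈ (δ a).1, φ ∈ X
  pi := fun p => {w | Fm.var p ∈ w.1}

namespace Game

variable {A : Type} {G : Game A}

/-- `Good t φ`: every outcome of strategy `t` (within budget `s`) satisfies `φ`. -/
def Good (G : Game A) (C : Set A) (s : A → ℝ) (w : G.W) (t : ↥C → G.St) (φ : Fm A) : Prop :=
  ∀ (δ : A → G.St) (u : G.W),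
    (∀ a : A, G.cost (δ a) a w ≤ s a) → (∀ a : ↥C, t a = δ a.1) →
    G.M w δ u → G.Sat φ u

def CondA (G : Game A) (C : Set A) (s : A → ℝ) (w : G.W) (X : List (Fm A)) : Prop :=
  ∀ t : ↥C → G.St, ∃ φ ∈ X, G.Good C s w t φ

def CondB (G : Game A) (C : Set A) (s : A → ℝ) (w : G.W) (X : List (Fm A)) : Prop :=
  ∀ Y : Set (Fm A), Y.Nonempty → Y ⊂ {ψ | ψ ∈ X} →
    ∃ t : ↥C → G.St, ∀ φ ∈ Y,
      ∃ (δ : A → G.St) (u : G.W),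
        (∀ a : A, G.cost (δ a) a w ≤ s a) ∧ (∀ a : ↥C, t a = δ a.1) ∧
        G.M w δ u ∧ ¬ G.Sat φ u

lemma sat_dil_iff {C : Set A} {X : List (Fm A)} {s : A → ℝ} {w : G.W} :
    G.Sat (.dil C X s) w ↔ G.CondA C s w X ∧ G.CondB C s w X := by
  rw [Sat]
  simp only [Good, CondA, CondB, exists_prop]

lemma sat_imp_iff {φ ψ : Fm A} {w : G.W} :
    G.Sat (.imp φ ψ) w ↔ (G.Sat φ w → G.Sat ψ w) := by
  rw [Sat]; tauto

lemma sat_neg_iff {φ : Fm A} {w : G.W} : G.Sat (.neg φ) w ↔ ¬ G.Sat φ w := by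
  rw [Sat]

lemma sat_top {w : G.W} : G.Sat Fm.top w := by
  rw [Fm.top, sat_imp_iff]; exact id

lemma not_sat_bot {w : G.W} : ¬ G.Sat Fm.bot w := by
  rw [Fm.bot, sat_neg_iff, not_not]; exact sat_top

lemma sat_conj_iff {φ ψ : Fm A} {w : G.W} :
    G.Sat (Fm.conj φ ψ) w ↔ G.Sat φ w ∧ G.Sat ψ w := by
  rw [Fm.conj, sat_neg_iff, sat_imp_iff, sat_neg_iff]; tauto

lemma sat_disj_iff {φ ψ : Fm A} {w : G.W} :
    G.Sat (Fm.disj φ ψ) w ↔ G.Sat φ w ∨ G.Sat ψ w := by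
  rw [Fm.disj, sat_imp_iff, sat_neg_iff]; tauto

lemma sat_bigOr_iff {L : List (Fm A)} {w : G.W} :
    G.Sat (Fm.bigOr L) w ↔ ∃ φ ∈ L, G.Sat φ w := by
  induction L with
  | nil => simp [Fm.bigOr, not_sat_bot]
  | cons φ rest ih => simp [Fm.bigOr, sat_disj_iff, ih]

lemma sat_wdil_iff {C : Set A} {X : List (Fm A)} {s : A → ℝ} {w : G.W} :
    G.Sat (Fm.wdil C X s) w ↔
      ∃ Z : List (Fm A), Z.Sublist X ∧ Z ≠ [] ∧ G.Sat (.dil C Z s) w := by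
  rw [Fm.wdil, sat_bigOr_iff]
  constructor
  · rintro ⟨φ, hφ, hsat⟩
    simp only [List.mem_map, List.mem_filter, List.mem_sublists] at hφ
    obtain ⟨Z, ⟨hZ1, hZ2⟩, rfl⟩ := hφ
    exact ⟨Z, hZ1, by simpa using hZ2, hsat⟩
  · rintro ⟨Z, h1, h2, h3⟩
    refine ⟨.dil C Z s, ?_, h3⟩
    simp only [List.mem_map, List.mem_filter, List.mem_sublists]
    exact ⟨Z, ⟨h1, by simpa using h2⟩, rfl⟩

lemma exists_dil_aux {C : Set A} {s : A → ℝ} {w : G.W} :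
    ∀ (n : ℕ) (Z : List (Fm A)), Z.length ≤ n → Z ≠ [] → G.CondA C s w Z →
      ∃ Z' : List (Fm A), Z'.Sublist Z ∧ Z' ≠ [] ∧ G.Sat (.dil C Z' s) w := by
  intro n
  induction n with
  | zero =>
    intro Z hlen hne _
    simp [List.length_eq_zero_iff.mp (Nat.le_zero.mp hlen)] at hne
  | succ n ih =>
    intro Z hlen hne hA
    by_cases hB : G.CondB C s w Z
    · exact ⟨Z, List.Sublist.refl Z, hne, sat_dil_iff.mpr ⟨hA, hB⟩⟩
    · classical
      simp only [CondB, not_forall] at hB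
      obtain ⟨Y, hYne, hYsub, hY⟩ := hB
      push_neg at hY
      -- hY : ∀ t, ∃ φ ∈ Y, ∀ δ u, cost → agree → M → Sat φ u
      set Z' : List (Fm A) := Z.filter (fun ψ => decide (ψ ∈ Y)) with hZ'
      have hmemZ' : ∀ ψ, ψ ∈ Z' ↔ ψ ∈ Y := by
        intro ψ
        simp only [hZ', List.mem_filter, decide_eq_true_eq]
        exact ⟨fun h => h.2, fun h => ⟨hYsub.1 h, h⟩⟩
      have hA' : G.CondA C s w Z' := by
        intro t
        obtain ⟨φ, hφY, hφ⟩ := hY t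
        exact ⟨φ, (hmemZ' φ).mpr hφY, fun δ u h1 h2 h3 => hφ δ u h1 h2 h3⟩
      have hlt : Z'.length < Z.length := by
        rw [hZ', List.length_filter_lt_length_iff_exists]
        obtain ⟨ψ, hψZ, hψY⟩ := Set.exists_of_ssubset hYsub
        exact ⟨ψ, hψZ, by simpa using hψY⟩
      have hne' : Z' ≠ [] := by
        obtain ⟨ψ, hψ⟩ := hYne
        exact List.ne_nil_of_mem ((hmemZ' ψ).mpr hψ)
      obtain ⟨Z'', h1, h2, h3⟩ := ih Z' (by omega) hne' hA'
      exact ⟨Z'', h1.trans (List.filter_sublist (l := Z)), h2, h3⟩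

lemma sat_wdil_of_condA {C : Set A} {s : A → ℝ} {w : G.W} {X : List (Fm A)}
    (hne : X ≠ []) (hA : G.CondA C s w X) : G.Sat (Fm.wdil C X s) w := by
  obtain ⟨Z, h1, h2, h3⟩ := exists_dil_aux X.length X le_rfl hne hA
  exact sat_wdil_iff.mpr ⟨Z, h1, h2, h3⟩

theorem sound {φ : Fm A} (h : Fm.Derives φ) (G : Game A) (w : G.W) : G.Sat φ w := by
  induction h generalizing w with
  | @taut φ ht =>
    classical
    have := ht (fun ψ => decide (G.Sat ψ w))
      (fun ψ => by simp [sat_neg_iff]) (fun ψ χ => by simp [sat_imp_iff, imp_iff_not_or])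
    exact of_decide_eq_true this
  | @comb C X Y s hC hX hY =>
    rw [sat_imp_iff, sat_dil_iff]
    rintro ⟨hAX, -⟩
    rw [sat_imp_iff, sat_dil_iff]
    rintro ⟨hAY, -⟩
    have hne : Fm.otimes X Y ≠ [] := by
      obtain ⟨φ, hφ⟩ := List.exists_mem_of_ne_nil X hX
      obtain ⟨ψ, hψ⟩ := List.exists_mem_of_ne_nil Y hY
      refine List.ne_nil_of_mem (a := Fm.conj φ ψ) ?_
      simp only [Fm.otimes, List.mem_flatMap, List.mem_map]
      exact ⟨φ, hφ, ψ, hψ, rfl⟩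
    refine sat_wdil_of_condA hne fun t => ?_
    obtain ⟨φ, hφX, hφ⟩ := hAX t
    obtain ⟨ψ, hψY, hψ⟩ := hAY t
    refine ⟨Fm.conj φ ψ, ?_, fun δ u h1 h2 h3 => ?_⟩
    · simp only [Fm.otimes, List.mem_flatMap, List.mem_map]
      exact ⟨φ, hφX, ψ, hψY, rfl⟩
    · exact sat_conj_iff.mpr ⟨hφ δ u h1 h2 h3, hψ δ u h1 h2 h3⟩
  | @mono C D X s s' hC hCD hX hss =>
    rw [sat_imp_iff, sat_dil_iff]
    rintro ⟨hAX, -⟩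
    refine sat_wdil_of_condA hX fun t => ?_
    obtain ⟨φ, hφX, hφ⟩ := hAX (fun a => t ⟨a.1, hCD a.2⟩)
    exact ⟨φ, hφX, fun δ u h1 h2 h3 =>
      hφ δ u (fun a => (h1 a).trans (hss a)) (fun a => h2 ⟨a.1, hCD a.2⟩) h3⟩
  | @minim C X Y s hC hY hYX =>
    rw [sat_imp_iff, sat_dil_iff]
    rintro ⟨-, hBX⟩
    rw [sat_neg_iff, sat_dil_iff]
    rintro ⟨hAY, -⟩
    have hYne : {ψ | ψ ∈ Y}.Nonempty := by
      obtain ⟨ψ, hψ⟩ := List.exists_mem_of_ne_nil Y hY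
      exact ⟨ψ, hψ⟩
    obtain ⟨t, ht⟩ := hBX {ψ | ψ ∈ Y} hYne hYX
    obtain ⟨φ, hφY, hφ⟩ := hAY t
    obtain ⟨δ, u, h1, h2, h3, h4⟩ := ht φ hφY
    exact h4 (hφ δ u h1 h2 h3)
  | @noalt C D X s hC hD hsing =>
    obtain ⟨φ₀, hφ₀⟩ := hsing
    rw [sat_imp_iff, sat_dil_iff, sat_dil_iff]
    rintro ⟨hAX, -⟩
    constructor
    · intro t
      refine ⟨φ₀, by rw [← Set.mem_setOf_eq (p := fun ψ => ψ ∈ X), hφ₀]; rfl,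
        fun δ u h1 h2 h3 => ?_⟩
      obtain ⟨φ, hφX, hφ⟩ := hAX (fun a : ↥C => δ a.1)
      have : φ = φ₀ := by
        have : φ ∈ {ψ | ψ ∈ X} := hφX
        rw [hφ₀] at this; exact this
      rw [← this]
      exact hφ δ u h1 (fun a => rfl) h3
    · intro Y hYne hYsub
      exfalso
      rw [hφ₀] at hYsub
      rcases Set.subset_singleton_iff_eq.mp hYsub.1 with h | h
      · exact hYne.ne_empty h
      · exact hYsub.2 (h ▸ Set.Subset.refl _)
  | @mp φ ψ h1 h2 ih1 ih2 => exact (sat_imp_iff.mp (ih2 w)) (ih1 w)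
  | @nec φ C s hC hφ ih =>
    rw [sat_dil_iff]
    constructor
    · exact fun t => ⟨φ, List.mem_singleton_self φ, fun δ u _ _ _ => ih u⟩
    · intro Y hYne hYsub
      exfalso
      have : {ψ | ψ ∈ [φ]} = {φ} := by ext ψ; simp
      rw [this] at hYsub
      rcases Set.subset_singleton_iff_eq.mp hYsub.1 with h | h
      · exact hYne.ne_empty h
      · exact hYsub.2 (h ▸ Set.Subset.refl _)
  | @subst C X s τ hC hX hτ ih =>
    rw [sat_imp_iff, sat_dil_iff]
    rintro ⟨hAX, -⟩
    have hne : X.map τ ≠ [] := by simpa using hX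
    refine sat_wdil_of_condA hne fun t => ?_
    obtain ⟨φ, hφX, hφ⟩ := hAX t
    refine ⟨τ φ, List.mem_map_of_mem (f := τ) hφX, fun δ u h1 h2 h3 => ?_⟩
    exact (sat_imp_iff.mp (ih φ hφX u)) (hφ δ u h1 h2 h3)

end Game

/-- Strong soundness: if `X ⊢ φ` and `w` is a state of a game such that `w ⊩ χ`
for each formula `χ ∈ X`, then `w ⊩ φ`. -/
theorem strong_soundness {A : Type} [Nonempty A] {Γ : Set (Fm A)} {φ : Fm A}
    (h : Fm.DerivesFrom Γ φ) (G : Game A) (w : G.W)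
    (hΓ : ∀ χ ∈ Γ, G.Sat χ w) : G.Sat φ w := by
  induction h with
  | thm hd => exact Game.sound hd G w
  | hyp hm => exact hΓ _ hm
  | mp h1 h2 ih1 ih2 => exact (Game.sat_imp_iff.mp ih2) ih1
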